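/- Let y = Σ_{l=1}^{m−1} s_l·2^{l−1} ∈ {0, …, 2ⁿ−1} and let x ∈ ℂ^{2^{n+1}} be the vector (H^{⊗n} e_y) ⊗ α, where the ℂ² factor carrying α occupies the least-significant qubit (bit 0). Then for every index j = Σ_{l=0}^{n} j_l·2^l with bits j_l ∈ {0,1}, the coordinate x_j equals 2^{−n/2}·(−1)^{Σ_{l=1}^{m−1} j_l s_l}·α_{j₀}. Consequently x_{j + 2^m} = x_j whenever j + 2^m < 2^{n+1}, and if s_{m−1} = 1 then x_{j + 2^{m−1}} = −x_j whenever binary digit m−1 of j is 0. -/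

import Mathlib

open Complex

/-- Entry `(a, b)` of the `n`-fold tensor power `H^{⊗n}` of the Hadamard matrix
`H = (1/√2)[[1,1],[1,−1]]` acting on `ℂ^{2ⁿ}`, with indices identified with their binary
digits: `H^{⊗n}(a,b) = (1/√2)ⁿ · ∏_{l<n} (−1)^{a_l b_l}`. -/
noncomputable def HnMat (n : ℕ) : Matrix (Fin (2 ^ n)) (Fin (2 ^ n)) ℂ :=
  fun a b => ((1 / Real.sqrt 2 : ℝ) ^ n : ℂ) *
    ∏ l ∈ Finset.range n, (if (a : ℕ).testBit l ∧ (b : ℕ).testBit l then (-1 : ℂ) else 1)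

lemma sum_pow_lt (f : ℕ → Bool) (k : ℕ) :
    (∑ l ∈ Finset.range k, if f l then 2 ^ l else 0) < 2 ^ k := by
  induction k with
  | zero => simp
  | succ k ih =>
    rw [Finset.sum_range_succ, pow_succ]
    split <;> omega

lemma testBit_sum_pow (f : ℕ → Bool) (k i : ℕ) :
    (∑ l ∈ Finset.range k, if f l then 2 ^ l else 0).testBit i
      = (f i && decide (i < k)) := by
  induction k with
  | zero => simp
  | succ k ih =>
    rw [Finset.sum_range_succ]
    by_cases hf : f k
    · simp only [hf, if_true]
      rcases lt_trichotomy i k with h | h | h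
      · rw [Nat.add_comm, Nat.testBit_two_pow_add_gt h, ih]
        have h1 : decide (i < k) = true := by simp [h]
        have h2 : decide (i < k + 1) = true := by simp; omega
        rw [h1, h2]
      · subst h
        rw [Nat.add_comm, Nat.testBit_two_pow_add_eq, ih]
        simp [hf]
      · have hlt : (∑ l ∈ Finset.range k, if f l then 2 ^ l else 0) + 2 ^ k < 2 ^ i := by
          have := sum_pow_lt f k
          have h2 : 2 ^ (k + 1) ≤ 2 ^ i := Nat.pow_le_pow_right (by norm_num) h
          rw [pow_succ] at h2; omega
        rw [Nat.testBit_lt_two_pow hlt]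
        have : decide (i < k + 1) = false := by simp; omega
        rw [this, Bool.and_false]
    · simp only [Bool.not_eq_true] at hf
      have hz : (if f k then 2 ^ k else 0) = 0 := by simp [hf]
      rw [hz, add_zero, ih]
      rcases Nat.lt_trichotomy i k with h | h | h
      · have h1 : decide (i < k) = true := by simp [h]
        have h2 : decide (i < k + 1) = true := by simp; omega
        rw [h1, h2]
      · subst h; simp [hf]
      · have h1 : decide (i < k) = false := by simp; omega
        have h2 : decide (i < k + 1) = false := by simp; omega
        rw [h1, h2]

/-- Let `n ≥ 1`, `2 ≤ m ≤ n+1`, bits `s₁, …, s_{m−1}`, and `α ∈ ℂ²`.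
Let `y = Σ_{l=1}^{m−1} s_l 2^{l−1}` and let `x ∈ ℂ^{2^{n+1}}` be the vector
`(H^{⊗n} e_y) ⊗ α`, the `ℂ²` factor carrying `α` occupying the least-significant qubit
(bit `0`), i.e. `x_j = H^{⊗n}(j div 2, y) · α_{j mod 2}`.  Then for every
`j = Σ_{l=0}^{n} j_l 2^l`, the coordinate `x_j` equals
`2^{−n/2} (−1)^{Σ_{l=1}^{m−1} j_l s_l} α_{j₀}`;  consequently `x_{j+2^m} = x_j` whenever
`j + 2^m < 2^{n+1}`, and if `s_{m−1} = 1` then `x_{j+2^{m−1}} = −x_j` whenever binary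
digit `m−1` of `j` is `0` (so that `j + 2^{m−1} < 2^{n+1}`). -/
theorem stmt15 (n m : ℕ) (hn : 1 ≤ n) (hm : 2 ≤ m) (hmn : m ≤ n + 1)
    (s : ℕ → Bool) (α : Fin 2 → ℂ) (y : Fin (2 ^ n))
    (hy : (y : ℕ) = ∑ l ∈ Finset.Icc 1 (m - 1), if s l then 2 ^ (l - 1) else 0) :
    let x : Fin (2 ^ (n + 1)) → ℂ := fun j =>
      HnMat n ⟨(j : ℕ) / 2, (Nat.div_lt_iff_lt_mul (by norm_num)).mpr (by rw [← pow_succ]; exact j.isLt)⟩ y *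
        α ⟨(j : ℕ) % 2, by omega⟩
    (∀ j : Fin (2 ^ (n + 1)),
        x j = ((1 / Real.sqrt 2 : ℝ) ^ n : ℂ) *
          (∏ l ∈ Finset.Icc 1 (m - 1), if (j : ℕ).testBit l ∧ s l then (-1 : ℂ) else 1) *
          α ⟨(j : ℕ) % 2, by omega⟩) ∧
    (∀ j : Fin (2 ^ (n + 1)), ∀ h : (j : ℕ) + 2 ^ m < 2 ^ (n + 1),
        x ⟨(j : ℕ) + 2 ^ m, h⟩ = x j) ∧
    (s (m - 1) = true → ∀ j : Fin (2 ^ (n + 1)), (j : ℕ).testBit (m - 1) = false →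
        ∀ h : (j : ℕ) + 2 ^ (m - 1) < 2 ^ (n + 1),
          x ⟨(j : ℕ) + 2 ^ (m - 1), h⟩ = -x j) := by
  intro x
  -- rewrite y as a sum over `range (m-1)`
  have hIcc : Finset.Icc 1 (m - 1) = Finset.Ico 1 m := by
    ext l; simp only [Finset.mem_Icc, Finset.mem_Ico]; omega
  have hy' : (y : ℕ) = ∑ l ∈ Finset.range (m - 1), if s (l + 1) then 2 ^ l else 0 := by
    rw [hy, hIcc, Finset.sum_Ico_eq_sum_range]
    refine Finset.sum_congr rfl fun l _ => ?_
    simp [add_comm 1 l]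
  have ytest : ∀ i, (y : ℕ).testBit i = (s (i + 1) && decide (i + 1 ≤ m - 1)) := by
    intro i
    rw [hy', testBit_sum_pow]
    congr 1
  -- the key product identity
  have prodkey : ∀ j : ℕ,
      (∏ l ∈ Finset.range n, if (j / 2).testBit l ∧ (y : ℕ).testBit l then (-1 : ℂ) else 1)
        = ∏ l ∈ Finset.Icc 1 (m - 1), if j.testBit l ∧ s l then (-1 : ℂ) else 1 := by
    intro j
    have hR : (∏ l ∈ Finset.Icc 1 (m - 1), if j.testBit l ∧ s l then (-1 : ℂ) else 1)
        = ∏ l ∈ Finset.range (m - 1), if j.testBit (l + 1) ∧ s (l + 1) then (-1 : ℂ) else 1 := by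
      rw [hIcc, Finset.prod_Ico_eq_prod_range]
      refine Finset.prod_congr rfl fun l _ => ?_
      simp [add_comm 1 l]
    rw [hR]
    have hL : ∀ l, (if (j / 2).testBit l ∧ (y : ℕ).testBit l then (-1 : ℂ) else 1)
        = if j.testBit (l + 1) ∧ (s (l + 1) && decide (l + 1 ≤ m - 1)) then (-1 : ℂ) else 1 := by
      intro l
      rw [Nat.testBit_div_two, ytest]
    simp only [hL]
    rw [← Finset.prod_subset (Finset.range_subset_range.mpr (show m - 1 ≤ n by omega))
      (fun l _ hl => by
        simp only [Finset.mem_range, not_lt] at hl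
        have : decide (l + 1 ≤ m - 1) = false := by simp; omega
        rw [this, Bool.and_false]; simp)]
    refine Finset.prod_congr rfl fun l hl => ?_
    simp only [Finset.mem_range] at hl
    have : decide (l + 1 ≤ m - 1) = true := by simp; omega
    rw [this, Bool.and_true]
  have key : ∀ j : Fin (2 ^ (n + 1)),
      x j = ((1 / Real.sqrt 2 : ℝ) ^ n : ℂ) *
        (∏ l ∈ Finset.Icc 1 (m - 1), if (j : ℕ).testBit l ∧ s l then (-1 : ℂ) else 1) *
        α ⟨(j : ℕ) % 2, by omega⟩ := by
    intro j
    show HnMat n _ y * _ = _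
    rw [HnMat]
    simp only [Fin.val_mk]
    rw [prodkey (j : ℕ)]
  refine ⟨key, ?_, ?_⟩
  · -- periodicity with period 2^m
    intro j h
    rw [key, key]
    have hmod : ((j : ℕ) + 2 ^ m) % 2 = (j : ℕ) % 2 := by
      have : 2 ^ m = 2 * 2 ^ (m - 1) := by
        rw [← pow_succ']; congr 1; omega
      omega
    have hprod : (∏ l ∈ Finset.Icc 1 (m - 1), if ((j : ℕ) + 2 ^ m).testBit l ∧ s l then (-1 : ℂ) else 1)
        = ∏ l ∈ Finset.Icc 1 (m - 1), if (j : ℕ).testBit l ∧ s l then (-1 : ℂ) else 1 := by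
      refine Finset.prod_congr rfl fun l hl => ?_
      simp only [Finset.mem_Icc] at hl
      rw [add_comm, Nat.testBit_two_pow_add_gt (by omega)]
    simp only [Fin.val_mk, hprod]
    congr 1
    exact congrArg α (Fin.ext hmod)
  · -- sign flip under adding 2^(m-1)
    intro hs j hbit h
    rw [key, key]
    have hmod : ((j : ℕ) + 2 ^ (m - 1)) % 2 = (j : ℕ) % 2 := by
      have : 2 ^ (m - 1) = 2 * 2 ^ (m - 2) := by
        rw [← pow_succ']; congr 1; omega
      omega
    have hsplit : Finset.Icc 1 (m - 1) = insert (m - 1) (Finset.Icc 1 (m - 2)) := by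
      ext l; simp only [Finset.mem_insert, Finset.mem_Icc]; omega
    have hnotmem : (m - 1) ∉ Finset.Icc 1 (m - 2) := by simp; omega
    have hbit' : ((j : ℕ) + 2 ^ (m - 1)).testBit (m - 1) = true := by
      rw [add_comm, Nat.testBit_two_pow_add_eq, hbit]; rfl
    have hP : ∀ l ∈ Finset.Icc 1 (m - 2),
        (if ((j : ℕ) + 2 ^ (m - 1)).testBit l ∧ s l then (-1 : ℂ) else 1)
          = if (j : ℕ).testBit l ∧ s l then (-1 : ℂ) else 1 := by
      intro l hl
      simp only [Finset.mem_Icc] at hl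
      rw [add_comm, Nat.testBit_two_pow_add_gt (by omega)]
    rw [hsplit, Finset.prod_insert hnotmem, Finset.prod_insert hnotmem,
      Finset.prod_congr rfl hP, if_pos ⟨hbit', hs⟩, if_neg (by simp [hbit])]
    have : ((⟨((j : ℕ) + 2 ^ (m - 1)) % 2, by omega⟩ : Fin 2)) = ⟨(j : ℕ) % 2, by omega⟩ :=
      Fin.ext hmod
    simp only [Fin.val_mk] at this ⊢
    rw [this]
    ring
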